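/- arXiv:1910.10139 — 4 statements merged into one kernel-verified Lean document; each statement's English description precedes it below -/
import Mathlib

section
/- Let α, β be real numbers with 0 < α ≤ 1 and 0 < β < 1, and let A be the 4×4 real matrix with rows (3α(2−3β), 9αβ, 0, 0), ((2α+1)(1−β), (2α+1)(1−β), 2(2α+1)β, 0), (0, 2(α+2)(1−β), (α+2)β, (α+2)β), and (0, 0, 9(1−β), 3(3β−1)). Then every complex eigenvalue μ of A (i.e., of A viewed as a matrix over ℂ) satisfies Re(μ) ≤ λ, where λ := (8α + 7β(1−α) + 1 + √(D(α,β)))/2 and D(α,β) := 16α² − 8α + 1 + α²β² − 2αβ² + β² + 14β + 2αβ − 16α²β. -/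
set_option maxHeartbeats 2000000 in
private theorem my_det_fin_four {R : Type*} [CommRing R]
    (A : Matrix (Fin 4) (Fin 4) R) :
    A.det =
      A 0 0 * (A 1 1 * A 2 2 * A 3 3 - A 1 1 * A 2 3 * A 3 2
        - A 1 2 * A 2 1 * A 3 3 + A 1 2 * A 2 3 * A 3 1
        + A 1 3 * A 2 1 * A 3 2 - A 1 3 * A 2 2 * A 3 1)
      - A 0 1 * (A 1 0 * A 2 2 * A 3 3 - A 1 0 * A 2 3 * A 3 2
        - A 1 2 * A 2 0 * A 3 3 + A 1 2 * A 2 3 * A 3 0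
        + A 1 3 * A 2 0 * A 3 2 - A 1 3 * A 2 2 * A 3 0)
      + A 0 2 * (A 1 0 * A 2 1 * A 3 3 - A 1 0 * A 2 3 * A 3 1
        - A 1 1 * A 2 0 * A 3 3 + A 1 1 * A 2 3 * A 3 0
        + A 1 3 * A 2 0 * A 3 1 - A 1 3 * A 2 1 * A 3 0)
      - A 0 3 * (A 1 0 * A 2 1 * A 3 2 - A 1 0 * A 2 2 * A 3 1
        - A 1 1 * A 2 0 * A 3 2 + A 1 1 * A 2 2 * A 3 0
        + A 1 2 * A 2 0 * A 3 1 - A 1 2 * A 2 1 * A 3 0) := by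
  rw [Matrix.det_succ_row_zero]
  have e1 : Fin.succ (2 : Fin 3) = (3 : Fin 4) := rfl
  have e2 : Fin.castSucc (2 : Fin 3) = (2 : Fin 4) := rfl
  norm_num [Fin.sum_univ_succ, Matrix.det_fin_three, Matrix.submatrix_apply,
    Fin.succAbove, e1, e2]
  simp (config := {decide := true})
  ring

set_option maxHeartbeats 2000000 in
/-- Every complex eigenvalue of the generator `A` (viewed over `ℂ`) has real
part at most `λ = (8α + 7β(1−α) + 1 + √D(α,β))/2`. -/
theorem lambda_is_max_real_part_eigenvalue_of_A (α β : ℝ) (hα0 : 0 < α)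
    (hα1 : α ≤ 1) (hβ0 : 0 < β) (hβ1 : β < 1) :
    let A : Matrix (Fin 4) (Fin 4) ℝ :=
      !![3*α*(2-3*β), 9*α*β, 0, 0;
         (2*α+1)*(1-β), (2*α+1)*(1-β), 2*(2*α+1)*β, 0;
         0, 2*(α+2)*(1-β), (α+2)*β, (α+2)*β;
         0, 0, 9*(1-β), 3*(3*β-1)]
    let lam : ℝ := (8*α + 7*β*(1-α) + 1 +
      Real.sqrt (16*α^2 - 8*α + 1 + α^2*β^2 - 2*α*β^2 + β^2 + 14*β + 2*α*β
        - 16*α^2*β)) / 2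
    ∀ μ : ℂ,
      Matrix.det (μ • (1 : Matrix (Fin 4) (Fin 4) ℂ)
          - A.map (fun x : ℝ => (x : ℂ))) = 0 →
      μ.re ≤ lam := by
  intro A lam μ h
  have hD : 0 ≤ 16*α^2 - 8*α + 1 + α^2*β^2 - 2*α*β^2 + β^2 + 14*β + 2*α*β
      - 16*α^2*β := by
    nlinarith [sq_nonneg ((1-α)*β + 4*α - 1),
      mul_nonneg (mul_nonneg (by linarith : (0:ℝ) ≤ 1 - α)
        (by linarith : (0:ℝ) ≤ 2 + α)) hβ0.le]
  have hsq : 0 ≤ Real.sqrt (16*α^2 - 8*α + 1 + α^2*β^2 - 2*α*β^2 + β^2 + 14*β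
      + 2*α*β - 16*α^2*β) := Real.sqrt_nonneg _
  have key : μ * (μ + ((3*(1-β+α*β) : ℝ) : ℂ)) *
      (μ^2 - ((8*α+7*β*(1-α)+1 : ℝ) : ℂ) * μ +
        ((6*α+12*α^2+24*α*β-24*α^2*β+12*β^2-24*α*β^2+12*α^2*β^2 : ℝ) : ℂ))
      = 0 := by
    rw [← h]
    rw [my_det_fin_four]
    simp only [A, Matrix.sub_apply, Matrix.smul_apply, Matrix.one_apply,
      Matrix.map_apply, smul_eq_mul]
    norm_num [Matrix.one_apply, Matrix.vecHead, Matrix.vecTail, Function.comp]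
    push_cast
    ring
  rcases mul_eq_zero.mp key with h1 | h2
  · rcases mul_eq_zero.mp h1 with h0 | hr
    · -- μ = 0
      rw [h0]
      simp only [Complex.zero_re, lam]
      nlinarith [mul_nonneg hβ0.le (by linarith : (0:ℝ) ≤ 1 - α)]
    · -- μ = -3(1-β+αβ)
      have h' : μ.re + (3*(1-β+α*β)) = 0 := by
        have := congrArg Complex.re hr
        simpa using this
      have : μ.re = -(3*(1-β+α*β)) := by linarith
      rw [this]
      simp only [lam]
      nlinarith [mul_nonneg hα0.le hβ0.le,
        mul_nonneg hβ0.le (by linarith : (0:ℝ) ≤ 1 - α)]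
  · -- quadratic factor
    set t : ℝ := Real.sqrt (16*α^2 - 8*α + 1 + α^2*β^2 - 2*α*β^2 + β^2 + 14*β
      + 2*α*β - 16*α^2*β) with ht_def
    have ht : ((t : ℝ) : ℂ)^2 = ((16*α^2 - 8*α + 1 + α^2*β^2 - 2*α*β^2 + β^2
        + 14*β + 2*α*β - 16*α^2*β : ℝ) : ℂ) := by
      rw [← Complex.ofReal_pow, Real.sq_sqrt hD]
    have hfac2 : (2*μ - ((8*α+7*β*(1-α)+1 : ℝ) : ℂ) - (t : ℂ)) *
        (2*μ - ((8*α+7*β*(1-α)+1 : ℝ) : ℂ) + (t : ℂ)) = 0 := by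
      linear_combination (norm := (push_cast; ring)) (4:ℂ) * h2 - ht
    rcases mul_eq_zero.mp hfac2 with ha | hb
    · have h' : 2*μ.re - (8*α+7*β*(1-α)+1) - t = 0 := by
        have := congrArg Complex.re ha
        simpa using this
      simp only [lam, ← ht_def]
      linarith
    · have h' : 2*μ.re - (8*α+7*β*(1-α)+1) + t = 0 := by
        have := congrArg Complex.re hb
        simpa using this
      simp only [lam, ← ht_def]
      linarith
end

section
/- Let α, β be real numbers with 0 < α ≤ 1 and 0 < β < 1, and let A* be the 3×3 real matrix with rows ((1+2α)(1−2β), 2(1+2α)β, 0), ((2+α)(1−β), 0, (2+α)β), and (0, 6(1−β), 3(2β−1)). Then the real number λ* := 1 + 2α(1−β) + 2β is an eigenvalue of A*, i.e., det(λ*·I − A*) = 0. -/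
/-- The real number `λ* = 1 + 2α(1−β) + 2β` is an eigenvalue of the generator
`A*` of the generalised Pólya urn associated with the `1⋆`-process. -/
theorem lambda_star_is_eigenvalue_of_Astar (α β : ℝ) (hα0 : 0 < α)
    (hα1 : α ≤ 1) (hβ0 : 0 < β) (hβ1 : β < 1) :
    let Astar : Matrix (Fin 3) (Fin 3) ℝ :=
      !![(1+2*α)*(1-2*β), 2*(1+2*α)*β, 0;
         (2+α)*(1-β), 0, (2+α)*β;
         0, 6*(1-β), 3*(2*β-1)]
    let lamStar : ℝ := 1 + 2*α*(1-β) + 2*β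
    Matrix.det (lamStar • (1 : Matrix (Fin 3) (Fin 3) ℝ) - Astar) = 0 := by
  intro Astar lamStar
  show Matrix.det (lamStar • (1 : Matrix (Fin 3) (Fin 3) ℝ) - Astar) = 0
  simp [Astar, lamStar, Matrix.det_fin_three, Matrix.smul_apply, Matrix.one_apply, Matrix.sub_apply]
  ring
end

section
/- Let α, β be real numbers with 0 < α ≤ 1 and 0 < β < 1, and let A* be the 3×3 real matrix with rows ((1+2α)(1−2β), 2(1+2α)β, 0), ((2+α)(1−β), 0, (2+α)β), and (0, 6(1−β), 3(2β−1)). Then every complex eigenvalue μ of A* (i.e., of A* viewed as a matrix over ℂ) satisfies Re(μ) ≤ λ*, where λ* := 1 + 2α(1−β) + 2β. -/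
/-- Every complex eigenvalue of the `1⋆`-process generator `A*` (viewed over
`ℂ`) has real part at most `λ* = 1 + 2α(1−β) + 2β`. -/
theorem lambda_star_is_max_real_part_eigenvalue_of_Astar (α β : ℝ)
    (hα0 : 0 < α) (hα1 : α ≤ 1) (hβ0 : 0 < β) (hβ1 : β < 1) :
    let Astar : Matrix (Fin 3) (Fin 3) ℝ :=
      !![(1+2*α)*(1-2*β), 2*(1+2*α)*β, 0;
         (2+α)*(1-β), 0, (2+α)*β;
         0, 6*(1-β), 3*(2*β-1)]
    let lamStar : ℝ := 1 + 2*α*(1-β) + 2*β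
    ∀ μ : ℂ,
      Matrix.det (μ • (1 : Matrix (Fin 3) (Fin 3) ℂ)
          - Astar.map (fun x : ℝ => (x : ℂ))) = 0 →
      μ.re ≤ lamStar := by
  intro Astar lamStar μ h
  have hdet : (μ - ((1 + 2*α*(1-β) + 2*β : ℝ) : ℂ)) * μ
      * (μ + ((3 - 2*β + 2*α*β : ℝ) : ℂ)) = 0 := by
    rw [← h]
    simp only [Astar, Matrix.det_fin_three, Matrix.sub_apply, Matrix.smul_apply,
      Matrix.one_apply, Matrix.map_apply, Matrix.cons_val', Matrix.cons_val_zero,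
      Matrix.cons_val_one, Matrix.head_cons, Matrix.empty_val',
      Matrix.cons_val_fin_one, Matrix.head_fin_const, Matrix.cons_val_two,
      Matrix.tail_cons, Fin.isValue, ite_true, ite_false, smul_eq_mul]
    norm_num
    push_cast
    ring
  have hre : lamStar = 1 + 2*α*(1-β) + 2*β := rfl
  rcases mul_eq_zero.mp hdet with h1 | h2
  · rcases mul_eq_zero.mp h1 with ha | hb
    · have : μ = ((1 + 2*α*(1-β) + 2*β : ℝ) : ℂ) := sub_eq_zero.mp ha
      rw [this, Complex.ofReal_re, hre]
    · rw [hb, hre]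
      simp only [Complex.zero_re]
      nlinarith
  · have : μ = -((3 - 2*β + 2*α*β : ℝ) : ℂ) := by linear_combination h2
    rw [this, hre]
    simp only [Complex.neg_re, Complex.ofReal_re]
    nlinarith
end

section
/- Let α, β be real numbers with 0 < α ≤ 1 and 0 < β < 1. Define D(α,β) := 16α² − 8α + 1 + α²β² − 2αβ² + β² + 14β + 2αβ − 16α²β, λ := (8α + 7β(1−α) + 1 + √(D(α,β)))/2, and λ* := 1 + 2α(1−β) + 2β. Then λ > 0 and λ*/λ ≥ 1/2, and the inequality is strict if and only if α < 1 (with equality λ*/λ = 1/2 exactly when α = 1). -/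
/-- Main conclusion of Section 5: with `λ` the growth rate of the whole
complex and `λ* = 1 + 2α(1−β) + 2β` the growth rate of the star of a vertex
of weight 1, we have `λ > 0` and `λ*/λ ≥ 1/2`, with strict inequality iff
`α < 1` (and equality exactly when `α = 1`). -/
theorem ratio_lambda_star_lambda (α β : ℝ) (hα0 : 0 < α) (hα1 : α ≤ 1)
    (hβ0 : 0 < β) (hβ1 : β < 1) :
    let D : ℝ := 16*α^2 - 8*α + 1 + α^2*β^2 - 2*α*β^2 + β^2 + 14*β + 2*α*β
      - 16*α^2*β
    let lam : ℝ := (8*α + 7*β*(1-α) + 1 + Real.sqrt D) / 2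
    let lamStar : ℝ := 1 + 2*α*(1-β) + 2*β
    0 < lam ∧ 1/2 ≤ lamStar / lam ∧
    (1/2 < lamStar / lam ↔ α < 1) ∧
    (lamStar / lam = 1/2 ↔ α = 1) := by
  intro D lam lamStar
  set s : ℝ := 3 + β*(1-α) with hs
  have hs_pos : 0 < s := by nlinarith
  have hkey : s^2 - D = 8*(1-β)*(1-α)*(1+2*α) := by simp only [hs]; ring
  have hrhs : (0:ℝ) ≤ 8*(1-β)*(1-α)*(1+2*α) :=
    mul_nonneg (mul_nonneg (mul_nonneg (by norm_num) (by linarith)) (by linarith)) (by linarith)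
  have hD_le : D ≤ s^2 := by linarith
  have hsqrt_le : Real.sqrt D ≤ s := by
    calc Real.sqrt D ≤ Real.sqrt (s^2) := Real.sqrt_le_sqrt hD_le
    _ = s := Real.sqrt_sq hs_pos.le
  have hsqrt_nn : 0 ≤ Real.sqrt D := Real.sqrt_nonneg _
  have hlam_pos : 0 < lam := by
    show 0 < (8*α + 7*β*(1-α) + 1 + Real.sqrt D) / 2
    nlinarith
  have hle : 1/2 ≤ lamStar / lam := by
    rw [le_div_iff₀ hlam_pos]
    show 1/2 * ((8*α + 7*β*(1-α) + 1 + Real.sqrt D) / 2) ≤ 1 + 2*α*(1-β) + 2*β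
    nlinarith [hsqrt_le]
  have hstrict : α < 1 → 1/2 < lamStar / lam := by
    intro h
    have hrhs' : (0:ℝ) < 8*(1-β)*(1-α)*(1+2*α) :=
      mul_pos (mul_pos (mul_pos (by norm_num) (by linarith)) (by linarith)) (by linarith)
    have hDlt : D < s^2 := by linarith
    have hsqrt_lt : Real.sqrt D < s := (Real.sqrt_lt' hs_pos).mpr hDlt
    rw [lt_div_iff₀ hlam_pos]
    show 1/2 * ((8*α + 7*β*(1-α) + 1 + Real.sqrt D) / 2) < 1 + 2*α*(1-β) + 2*β
    nlinarith
  have heq : α = 1 → lamStar / lam = 1/2 := by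
    intro h
    have hD9 : D = 9 := by
      have hDdef : D = 16*α^2 - 8*α + 1 + α^2*β^2 - 2*α*β^2 + β^2 + 14*β + 2*α*β
        - 16*α^2*β := rfl
      rw [hDdef, h]; ring
    have h3 : Real.sqrt D = 3 := by
      rw [hD9, show (9:ℝ) = 3^2 by norm_num, Real.sqrt_sq (by norm_num)]
    show (1 + 2*α*(1-β) + 2*β) / ((8*α + 7*β*(1-α) + 1 + Real.sqrt D) / 2) = 1/2
    rw [h3, h]; ring
  refine ⟨hlam_pos, hle, ⟨?_, hstrict⟩, ⟨?_, heq⟩⟩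
  · intro h
    rcases lt_or_eq_of_le hα1 with h1 | h1
    · exact h1
    · exact absurd (heq h1) (by linarith)
  · intro h
    rcases lt_or_eq_of_le hα1 with h1 | h1
    · exact absurd h (by linarith [hstrict h1])
    · exact h1
end
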